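/- Let n ≥ 2 and let f ∈ 𝔽₃[x₁,…,xₙ] be a nonzero polynomial of total degree d with 2n ≥ d, which does not vanish identically on 𝔽₃ⁿ. Then f is nonzero at at least 3^((2n-d)/2) points of 𝔽₃ⁿ. -/

import Mathlib

open MvPolynomial Finset


/-- reduced exponent -/
def rexp (i : ℕ) : ℕ := if i = 0 then 0 else if i % 2 = 1 then 1 else 2

lemma rexp_le (i : ℕ) : rexp i ≤ i := by unfold rexp; split_ifs <;> omega

lemma rexp_le_two (i : ℕ) : rexp i ≤ 2 := by unfold rexp; split_ifs <;> omega

lemma rexp_zero : rexp 0 = 0 := rfl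

lemma pow_rexp (a : ZMod 3) : ∀ i, a ^ i = a ^ rexp i := by
  have h3 : ∀ j : ℕ, a ^ (j + 3) = a ^ (j + 1) := by
    intro j
    have : a ^ 3 = a := ZMod.pow_card a
    rw [pow_add, pow_add, this, pow_one]
  intro i
  induction i using Nat.strong_induction_on with
  | _ i ih =>
    match i with
    | 0 => rfl
    | 1 => rfl
    | 2 => rfl
    | (j+3) =>
      rw [h3 j, ih (j+1) (by omega)]
      congr 1
      unfold rexp
      split_ifs <;> omega

noncomputable def redm {n : ℕ} (m : Fin n →₀ ℕ) : Fin n →₀ ℕ :=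
  Finsupp.mapRange rexp rexp_zero m

noncomputable def red {n : ℕ} (f : MvPolynomial (Fin n) (ZMod 3)) :
    MvPolynomial (Fin n) (ZMod 3) :=
  ∑ m ∈ f.support, monomial (redm m) (coeff m f)

lemma eval_red {n : ℕ} (f : MvPolynomial (Fin n) (ZMod 3)) (x : Fin n → ZMod 3) :
    eval x (red f) = eval x f := by
  conv_rhs => rw [f.as_sum]
  rw [red, map_sum, map_sum]
  refine Finset.sum_congr rfl fun m _ => ?_
  rw [eval_monomial, eval_monomial, redm, Finsupp.prod_mapRange_index (by simp)]
  congr 1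
  exact Finsupp.prod_congr fun i _ => (pow_rexp (x i) (m i)).symm

lemma totalDegree_red {n : ℕ} (f : MvPolynomial (Fin n) (ZMod 3)) :
    (red f).totalDegree ≤ f.totalDegree := by
  refine le_trans (totalDegree_finset_sum _ _) (Finset.sup_le fun m hm => ?_)
  refine le_trans (totalDegree_monomial_le _ _) ?_
  refine le_trans ?_ (le_totalDegree hm)
  rw [redm, Finsupp.sum_mapRange_index (fun _ => rfl)]
  exact Finsupp.sum_le_sum fun i _ => rexp_le _

lemma red_support {n : ℕ} (f : MvPolynomial (Fin n) (ZMod 3)) :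
    ∀ m' ∈ (red f).support, ∀ i, m' i ≤ 2 := by
  intro m' hm' i
  rw [mem_support_iff] at hm'
  by_contra h
  apply hm'
  rw [red, coeff_sum]
  refine Finset.sum_eq_zero fun m _ => ?_
  rw [coeff_monomial, if_neg]
  intro heq
  apply h
  rw [← heq, redm, Finsupp.mapRange_apply]
  exact rexp_le_two _

lemma AF_key : ∀ k : ℕ, k ≤ 2 → (3:ℝ) ^ ((2 - (k:ℝ))/2) ≤ 3 - k := by
  intro k hk
  interval_cases k
  · rw [show ((2:ℝ) - (0:ℕ))/2 = 1 by norm_num, Real.rpow_one]; norm_num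
  · rw [show ((2:ℝ) - (1:ℕ))/2 = 1/2 by norm_num, ← Real.sqrt_eq_rpow]
    push_cast
    nlinarith [Real.sq_sqrt (show (0:ℝ) ≤ 3 by norm_num), Real.sqrt_nonneg 3]
  · rw [show ((2:ℝ) - (2:ℕ))/2 = 0 by norm_num, Real.rpow_zero]; norm_num

theorem AF : ∀ (n : ℕ) (f : MvPolynomial (Fin n) (ZMod 3)), f ≠ 0 →
    (∀ m ∈ f.support, ∀ i, m i ≤ 2) →
    (3 : ℝ) ^ ((2 * (n : ℝ) - f.totalDegree) / 2) ≤
      ({x : Fin n → ZMod 3 | MvPolynomial.eval x f ≠ 0}).ncard := by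
  intro n
  induction n with
  | zero =>
    intro f hf _
    have hC : f = C (coeff 0 f) := f.eq_C_of_isEmpty
    have hc : coeff 0 f ≠ 0 := fun h => hf (by rw [hC, h, map_zero])
    have hdeg : f.totalDegree = 0 := by rw [hC]; exact totalDegree_C _
    have hset : {x : Fin 0 → ZMod 3 | MvPolynomial.eval x f ≠ 0} = Set.univ := by
      ext x
      simp only [Set.mem_setOf_eq, Set.mem_univ, iff_true]
      rw [hC]
      simpa using hc
    rw [hset, hdeg, Set.ncard_univ, Nat.card_eq_fintype_card]
    simp
  | succ n ih =>
    intro f hf hsupp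
    classical
    set P := finSuccEquiv (ZMod 3) n f with hPdef
    set k := P.natDegree with hkdef
    set g := P.coeff k with hgdef
    have hPne : P ≠ 0 := by
      rw [hPdef]
      exact (map_ne_zero_iff _ (finSuccEquiv (ZMod 3) n).injective).mpr hf
    have hgne : g ≠ 0 := Polynomial.leadingCoeff_ne_zero.mpr hPne
    have hk2 : k ≤ 2 := by
      rw [hkdef, hPdef, natDegree_finSuccEquiv]
      exact degreeOf_le_iff.mpr fun m hm => hsupp m hm 0
    have hsupp_g : ∀ m ∈ g.support, ∀ i, m i ≤ 2 := by
      intro m hm i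
      have h1 : m.cons k ∈ f.support := mem_support_coeff_finSuccEquiv.mp hm
      have := hsupp _ h1 i.succ
      rwa [Finsupp.cons_succ] at this
    have hdg : g.totalDegree + k ≤ f.totalDegree :=
      totalDegree_coeff_finSuccEquiv_add_le f k hgne
    have IH := ih g hgne hsupp_g
    set S' : Finset (Fin n → ZMod 3) :=
      univ.filter (fun y => MvPolynomial.eval y g ≠ 0) with hS'def
    have hS' : ({y : Fin n → ZMod 3 | MvPolynomial.eval y g ≠ 0}).ncard = S'.card := by
      rw [← Set.ncard_coe_finset]; congr 1; ext y; simp [hS'def]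
    set T : Finset (Fin (n+1) → ZMod 3) :=
      univ.filter (fun x => MvPolynomial.eval x f ≠ 0) with hTdef
    have hT : ({x : Fin (n+1) → ZMod 3 | MvPolynomial.eval x f ≠ 0}).ncard = T.card := by
      rw [← Set.ncard_coe_finset]; congr 1; ext x; simp [hTdef]
    -- fiberwise counting
    have hfib : T.card = ∑ y : Fin n → ZMod 3,
        (univ.filter (fun a : ZMod 3 => MvPolynomial.eval (Fin.cons a y) f ≠ 0)).card := by
      rw [Finset.card_eq_sum_card_fiberwise
        (f := fun x : Fin (n+1) → ZMod 3 => Fin.tail x) (t := univ) (fun _ _ => mem_univ _)]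
      refine Finset.sum_congr rfl fun y _ => ?_
      refine Finset.card_nbij' (fun x => x 0) (fun a => Fin.cons a y) ?_ ?_ ?_ ?_
      · intro x hx
        simp only [hTdef, Finset.mem_coe, mem_filter, mem_univ, true_and] at hx ⊢
        obtain ⟨h1, h2⟩ := hx
        rwa [← h2, Fin.cons_self_tail]
      · intro a ha
        simp only [hTdef, Finset.mem_coe, mem_filter, mem_univ, true_and] at ha ⊢
        refine ⟨ha, ?_⟩
        simp
      · intro x hx
        simp only [hTdef, Finset.mem_coe, mem_filter, mem_univ, true_and] at hx
        show Fin.cons (x 0) y = x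
        rw [← hx.2]
        exact Fin.cons_self_tail x
      · intro a _
        simp
    -- per-fiber lower bound on S'
    have hfiber_bd : ∀ y ∈ S',
        3 - k ≤ (univ.filter (fun a : ZMod 3 => MvPolynomial.eval (Fin.cons a y) f ≠ 0)).card := by
      intro y hy
      set q := P.map (MvPolynomial.eval y) with hqdef
      have hqev : ∀ a : ZMod 3, MvPolynomial.eval (Fin.cons a y) f = q.eval a := fun a =>
        eval_eq_eval_mv_eval' y a f
      have hqk : q.coeff k ≠ 0 := by
        rw [hqdef, Polynomial.coeff_map]
        exact (mem_filter.mp hy).2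
      have hqne : q ≠ 0 := fun h => hqk (by simp [h])
      have hqdeg : q.natDegree ≤ k := Polynomial.natDegree_map_le
      have hZ : (univ.filter (fun a : ZMod 3 => q.eval a = 0)).card ≤ k := by
        calc (univ.filter (fun a : ZMod 3 => q.eval a = 0)).card
            ≤ q.roots.toFinset.card := by
              refine Finset.card_le_card fun a ha => ?_
              rw [Multiset.mem_toFinset, Polynomial.mem_roots']
              exact ⟨hqne, (mem_filter.mp ha).2⟩
          _ ≤ Multiset.card q.roots := q.roots.toFinset_card_le
          _ ≤ q.natDegree := q.card_roots'
          _ ≤ k := hqdeg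
      have hsplit := Finset.card_filter_add_card_filter_not
        (s := (univ : Finset (ZMod 3))) (p := fun a : ZMod 3 => q.eval a = 0)
      have hcard3 : (univ : Finset (ZMod 3)).card = 3 := by simp
      have heq : (univ.filter (fun a : ZMod 3 => MvPolynomial.eval (Fin.cons a y) f ≠ 0))
          = (univ.filter (fun a : ZMod 3 => ¬ q.eval a = 0)) := by
        ext a; simp [hqev]
      rw [heq]
      omega
    -- combine the counting
    have hcount : (3 - k) * S'.card ≤ T.card := by
      rw [hfib]
      calc (3 - k) * S'.card = ∑ _y ∈ S', (3 - k) := by rw [Finset.sum_const, smul_eq_mul, mul_comm]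
        _ ≤ ∑ y ∈ S',
            (univ.filter (fun a : ZMod 3 => MvPolynomial.eval (Fin.cons a y) f ≠ 0)).card :=
          Finset.sum_le_sum hfiber_bd
        _ ≤ ∑ y : Fin n → ZMod 3,
            (univ.filter (fun a : ZMod 3 => MvPolynomial.eval (Fin.cons a y) f ≠ 0)).card :=
          Finset.sum_le_sum_of_subset (Finset.subset_univ _)
    -- real arithmetic
    rw [hT]
    rw [hS'] at IH
    have hdgR : (g.totalDegree : ℝ) + k ≤ f.totalDegree := by exact_mod_cast hdg
    have e1 : (2 * ((n:ℝ)+1) - f.totalDegree)/2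
        ≤ (2 * (n:ℝ) - g.totalDegree)/2 + (2 - (k:ℝ))/2 := by linarith
    have hkR : ((3 - k : ℕ) : ℝ) = 3 - (k:ℝ) := by
      have h3 : k ≤ 3 := by omega
      rw [Nat.cast_sub h3]
      norm_num
    push_cast
    calc (3:ℝ) ^ ((2 * ((n:ℝ)+1) - (f.totalDegree:ℝ))/2)
        ≤ (3:ℝ) ^ ((2 * (n:ℝ) - g.totalDegree)/2 + (2 - (k:ℝ))/2) :=
          Real.rpow_le_rpow_of_exponent_le (by norm_num) e1
      _ = (3:ℝ) ^ ((2 * (n:ℝ) - g.totalDegree)/2) * (3:ℝ) ^ ((2 - (k:ℝ))/2) :=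
          Real.rpow_add (by norm_num) _ _
      _ ≤ (S'.card : ℝ) * (3 - (k:ℝ)) := by
          refine mul_le_mul IH (AF_key k hk2) (Real.rpow_nonneg (by norm_num) _) ?_
          exact_mod_cast Nat.zero_le _
      _ = (((3 - k) * S'.card : ℕ) : ℝ) := by rw [Nat.cast_mul, hkR]; ring
      _ ≤ (T.card : ℝ) := by exact_mod_cast hcount

theorem stmt_16 {n : ℕ} (hn : 2 ≤ n) (f : MvPolynomial (Fin n) (ZMod 3))
    (hf : f ≠ 0) (d : ℕ) (hd : f.totalDegree = d) (hnd : 2 * n ≥ d)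
    (hnv : ∃ x : Fin n → ZMod 3, MvPolynomial.eval x f ≠ 0) :
    (3 : ℝ) ^ ((2 * (n : ℝ) - d) / 2) ≤
      ({x : Fin n → ZMod 3 | MvPolynomial.eval x f ≠ 0}).ncard := by
  classical
  obtain ⟨x0, hx0⟩ := hnv
  have hev : ∀ x, MvPolynomial.eval x (red f) = MvPolynomial.eval x f := eval_red f
  have hf' : red f ≠ 0 := fun h => hx0 (by rw [← hev, h, map_zero])
  have hseteq : {x : Fin n → ZMod 3 | MvPolynomial.eval x f ≠ 0}
      = {x : Fin n → ZMod 3 | MvPolynomial.eval x (red f) ≠ 0} := by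
    ext x; simp [hev]
  rw [hseteq]
  refine le_trans ?_ (AF n (red f) hf' (red_support f))
  apply Real.rpow_le_rpow_of_exponent_le (by norm_num)
  have h1 : (red f).totalDegree ≤ d := hd ▸ totalDegree_red f
  have h2 : ((red f).totalDegree : ℝ) ≤ d := by exact_mod_cast h1
  linarith
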